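/- arXiv:1810.09681 — 6 statements merged into one kernel-verified Lean document; each statement's English description precedes it below -/
import Mathlib

section
/- Let 0 < p < 1, q = 1 − p, and f(t) = q e^{−itp} + p e^{itq} (the characteristic function of the centered Bernoulli variable X − p). Then for all real t, |f(t)| ≤ exp(−2pq sin²(t/2)). -/
/-- For `0 < p < 1`, `q = 1 − p`, and `f(t) = q e^{−itp} + p e^{itq}` the
characteristic function of the centered Bernoulli variable `X − p`, we have
`|f(t)| ≤ exp(−2pq sin²(t/2))` for all real `t`. -/
theorem bernoulli_charfun_bound (p : ℝ) (hp : p ∈ Set.Ioo (0 : ℝ) 1)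
    (f : ℝ → ℂ)
    (hf : ∀ t : ℝ, f t =
      (1 - p : ℂ) * Complex.exp (-Complex.I * t * p) +
        (p : ℂ) * Complex.exp (Complex.I * t * (1 - p)))
    (t : ℝ) :
    ‖f t‖ ≤ Real.exp (-2 * p * (1 - p) * Real.sin (t / 2) ^ 2) := by
  obtain ⟨hp0, hp1⟩ := hp
  have hcos := Real.cos_add (t * p) (t * (1 - p))
  have hsum : t * p + t * (1 - p) = t := by ring
  rw [hsum] at hcos
  have key : ‖f t‖ ^ 2
      = (1 - p) ^ 2 + p ^ 2 + 2 * p * (1 - p) * Real.cos t := by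
    rw [hf, Complex.sq_norm, Complex.normSq_apply]
    simp [Complex.add_re, Complex.add_im, Complex.mul_re, Complex.mul_im,
      Complex.exp_re, Complex.exp_im, Complex.I_re, Complex.I_im,
      Complex.ofReal_re, Complex.ofReal_im, hcos]
    ring_nf
    have hc2 : Real.cos t = Real.cos (p * t) * Real.cos (-(p * t) + t)
        - Real.sin (p * t) * Real.sin (-(p * t) + t) := by
      have h := Real.cos_add (p * t) (-(p * t) + t)
      rw [show p * t + (-(p * t) + t) = t by ring] at h
      exact h
    nlinarith [hc2, Real.sin_sq_add_cos_sq (p * t), Real.sin_sq_add_cos_sq (-(p * t) + t)]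
  have h1 := Real.cos_sq (t / 2)
  have h2 : 2 * (t / 2) = t := by ring
  rw [h2] at h1
  have h3 := Real.sin_sq_add_cos_sq (t / 2)
  have hsin : Real.sin (t / 2) ^ 2 = (1 - Real.cos t) / 2 := by linarith
  have habs := norm_nonneg (f t)
  have hexp : (-(4 * (p * (1 - p) * Real.sin (t / 2) ^ 2))) + 1
      ≤ Real.exp (-(4 * (p * (1 - p) * Real.sin (t / 2) ^ 2))) :=
    Real.add_one_le_exp _
  have hx : Real.exp (-2 * p * (1 - p) * Real.sin (t / 2) ^ 2) ^ 2
      = Real.exp (-(4 * (p * (1 - p) * Real.sin (t / 2) ^ 2))) := by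
    rw [sq, ← Real.exp_add]; ring_nf
  have hexppos := Real.exp_pos (-2 * p * (1 - p) * Real.sin (t / 2) ^ 2)
  nlinarith [key, hsin, hexp, hx, habs, hexppos]
end

section
/- Let 0 < p < 1, q = 1 − p, f(t) = q e^{−itp} + p e^{itq}, and σ = √(npq). Then for all integers n ≥ 2, ∫_{|t| ≤ π} |f(t)^n − e^{−npqt²/2}| dt < (1/σ²) · ( f(p,n) + π σ² e^{−σ²} + (4/π) e^{−π²σ²/8} ), where f(p,n) = (p² + q²) · (π⁴/96) · (n/(n−1))² + (3π⁵√(πpq)/(2^{10}√n)) · (n/(n−1))^{5/2}. -/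
open Real MeasureTheory intervalIntegral

lemma abs_cexp_I_mul_sub_one_le (x : ℝ) :
    ‖Complex.exp (Complex.I * x) - 1‖ ≤ |x| := by
  have h : Complex.exp (Complex.I * x) - 1 = ((Real.cos x - 1 : ℝ) : ℂ) + (Real.sin x : ℝ) * Complex.I := by
    rw [mul_comm, Complex.exp_mul_I]
    push_cast [Complex.ofReal_cos, Complex.ofReal_sin]
    ring
  rw [h, Complex.norm_add_mul_I]
  have h2 : (Real.cos x - 1) ^ 2 + Real.sin x ^ 2 = 2 - 2 * Real.cos x := by
    have := Real.sin_sq_add_cos_sq x; nlinarith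
  rw [h2]
  have h3 : 2 - 2 * Real.cos x ≤ x ^ 2 := by
    have := Real.one_sub_sq_div_two_le_cos (x := x); linarith
  calc Real.sqrt (2 - 2 * Real.cos x) ≤ Real.sqrt (x ^ 2) := Real.sqrt_le_sqrt h3
    _ = |x| := Real.sqrt_sq_eq_abs x

lemma cexp_deriv1 (x : ℝ) :
    HasDerivAt (fun s : ℝ => Complex.exp (Complex.I * s) - 1 - Complex.I * s)
      (Complex.I * (Complex.exp (Complex.I * x) - 1)) x := by
  have h : ∀ z : ℂ, HasDerivAt (fun z : ℂ => Complex.exp (Complex.I * z) - 1 - Complex.I * z)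
      (Complex.I * (Complex.exp (Complex.I * z) - 1)) z := by
    intro z
    have h1 : HasDerivAt (fun z : ℂ => Complex.exp (Complex.I * z)) (Complex.I * Complex.exp (Complex.I * z)) z := by
      simpa [mul_comm] using ((hasDerivAt_id z).const_mul Complex.I).cexp
    exact ((h1.sub_const 1).sub ((hasDerivAt_id z).const_mul Complex.I)).congr_deriv (by ring)
  exact (h x).comp_ofReal

lemma abs_cexp_I_mul_sub_le_sq_aux {x : ℝ} (hx : 0 ≤ x) :
    ‖Complex.exp (Complex.I * x) - 1 - Complex.I * x‖ ≤ x ^ 2 / 2 := by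
  have hFTC := intervalIntegral.integral_eq_sub_of_hasDerivAt
    (f := fun s : ℝ => Complex.exp (Complex.I * s) - 1 - Complex.I * s)
    (f' := fun s : ℝ => Complex.I * (Complex.exp (Complex.I * s) - 1))
    (a := 0) (b := x) (fun s _ => cexp_deriv1 s) ?_
  · have hb : ‖∫ s in (0:ℝ)..x, Complex.I * (Complex.exp (Complex.I * s) - 1)‖ ≤
        |∫ s in (0:ℝ)..x, s| := by
      apply intervalIntegral.norm_integral_le_abs_of_norm_le
        ((MeasureTheory.ae_restrict_mem measurableSet_uIoc).mono fun t ht => ?_)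
        (by apply Continuous.intervalIntegrable; fun_prop)
      · rw [Set.uIoc_of_le hx] at ht
        have : ‖Complex.I * (Complex.exp (Complex.I * t) - 1)‖ = ‖Complex.exp (Complex.I * t) - 1‖ := by
          simp [map_mul]
        rw [this]
        calc ‖Complex.exp (Complex.I * t) - 1‖ ≤ |t| := abs_cexp_I_mul_sub_one_le t
          _ = t := abs_of_pos ht.1
    rw [hFTC] at hb
    simp only [Complex.ofReal_zero, mul_zero, Complex.exp_zero] at hb
    rw [integral_id] at hb
    calc ‖Complex.exp (Complex.I * x) - 1 - Complex.I * x‖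
        = ‖Complex.exp (Complex.I * ↑x) - 1 - Complex.I * ↑x - (1 - 1 - 0)‖ := by
          norm_num
      _ ≤ |(x ^ 2 - 0 ^ 2) / 2| := hb
      _ = x ^ 2 / 2 := by rw [abs_of_nonneg (by nlinarith)]; ring
  · apply Continuous.intervalIntegrable; fun_prop
lemma cexp_conj_neg (x : ℝ) :
    Complex.exp (Complex.I * x) - 1 - Complex.I * x =
      (starRingEnd ℂ) (Complex.exp (Complex.I * (-x : ℝ)) - 1 - Complex.I * (-x : ℝ)) := by
  rw [map_sub, map_sub, map_mul, map_one, ← Complex.exp_conj, map_mul]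
  simp [Complex.conj_I, Complex.conj_ofReal]

lemma abs_cexp_I_mul_sub_le_sq (x : ℝ) :
    ‖Complex.exp (Complex.I * x) - 1 - Complex.I * x‖ ≤ x ^ 2 / 2 := by
  rcases le_or_gt 0 x with hx | hx
  · exact abs_cexp_I_mul_sub_le_sq_aux hx
  · rw [cexp_conj_neg, Complex.norm_conj]
    calc ‖_‖ ≤ (-x) ^ 2 / 2 := abs_cexp_I_mul_sub_le_sq_aux (by linarith)
      _ = x ^ 2 / 2 := by ring

lemma cexp_deriv2 (x : ℝ) :
    HasDerivAt (fun s : ℝ => Complex.exp (Complex.I * s) - 1 - Complex.I * s + (s : ℂ) ^ 2 / 2)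
      (Complex.I * (Complex.exp (Complex.I * x) - 1 - Complex.I * x)) x := by
  have h : ∀ z : ℂ, HasDerivAt
      (fun z : ℂ => Complex.exp (Complex.I * z) - 1 - Complex.I * z + z ^ 2 / 2)
      (Complex.I * (Complex.exp (Complex.I * z) - 1 - Complex.I * z)) z := by
    intro z
    have h1 : HasDerivAt (fun z : ℂ => Complex.exp (Complex.I * z))
        (Complex.I * Complex.exp (Complex.I * z)) z := by
      simpa [mul_comm] using ((hasDerivAt_id z).const_mul Complex.I).cexp
    have h2 := (((h1.sub_const 1).sub ((hasDerivAt_id z).const_mul Complex.I)).add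
      ((hasDerivAt_pow 2 z).div_const 2))
    refine h2.congr_deriv ?_
    push_cast
    ring_nf
    simp [Complex.I_sq]
  exact (h x).comp_ofReal

lemma abs_cexp_third_aux {x : ℝ} (hx : 0 ≤ x) :
    ‖Complex.exp (Complex.I * x) - 1 - Complex.I * x + (x : ℂ) ^ 2 / 2‖ ≤ x ^ 3 / 6 := by
  have hFTC := intervalIntegral.integral_eq_sub_of_hasDerivAt
    (f := fun s : ℝ => Complex.exp (Complex.I * s) - 1 - Complex.I * s + (s : ℂ) ^ 2 / 2)
    (f' := fun s : ℝ => Complex.I * (Complex.exp (Complex.I * s) - 1 - Complex.I * s))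
    (a := 0) (b := x) (fun s _ => cexp_deriv2 s) (by apply Continuous.intervalIntegrable; fun_prop)
  have hb : ‖∫ s in (0:ℝ)..x, Complex.I * (Complex.exp (Complex.I * s) - 1 - Complex.I * s)‖ ≤
      |∫ s in (0:ℝ)..x, s ^ 2 / 2| := by
    apply intervalIntegral.norm_integral_le_abs_of_norm_le
      ((MeasureTheory.ae_restrict_mem measurableSet_uIoc).mono fun t ht => ?_)
      (by apply Continuous.intervalIntegrable; fun_prop)
    · have : ‖Complex.I * (Complex.exp (Complex.I * t) - 1 - Complex.I * t)‖ =
          ‖Complex.exp (Complex.I * t) - 1 - Complex.I * t‖ := by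
        simp [map_mul]
      rw [this]
      exact abs_cexp_I_mul_sub_le_sq t
  rw [hFTC] at hb
  have hint : ∫ s in (0:ℝ)..x, s ^ 2 / 2 = x ^ 3 / 6 := by
    rw [intervalIntegral.integral_div, integral_pow]
    norm_num
    ring
  rw [hint] at hb
  simp only [Complex.ofReal_zero, mul_zero, Complex.exp_zero] at hb
  calc ‖Complex.exp (Complex.I * x) - 1 - Complex.I * x + (x : ℂ) ^ 2 / 2‖
      = ‖Complex.exp (Complex.I * ↑x) - 1 - Complex.I * ↑x + ↑x ^ 2 / 2 - (1 - 1 - 0 + 0 ^ 2 / 2)‖ := by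
        norm_num
    _ ≤ |x ^ 3 / 6| := hb
    _ = x ^ 3 / 6 := abs_of_nonneg (by positivity)

lemma abs_cexp_third (x : ℝ) :
    ‖Complex.exp (Complex.I * x) - 1 - Complex.I * x + (x : ℂ) ^ 2 / 2‖ ≤ |x| ^ 3 / 6 := by
  rcases le_or_gt 0 x with hx | hx
  · rw [abs_of_nonneg hx]; exact abs_cexp_third_aux hx
  · have key : Complex.exp (Complex.I * x) - 1 - Complex.I * x + (x : ℂ) ^ 2 / 2 =
        (starRingEnd ℂ) (Complex.exp (Complex.I * (-x : ℝ)) - 1 - Complex.I * (-x : ℝ) +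
          ((-x : ℝ) : ℂ) ^ 2 / 2) := by
      rw [map_add, ← cexp_conj_neg, map_div₀, map_pow]
      push_cast
      rw [show (starRingEnd ℂ) 2 = 2 from Complex.conj_ofNat 2]
      simp [Complex.conj_ofReal]
    rw [key, Complex.norm_conj, abs_of_neg hx]
    calc ‖_‖ ≤ (-x) ^ 3 / 6 := abs_cexp_third_aux (by linarith)
      _ = (-x) ^ 3 / 6 := rfl

lemma exp_neg_sub_one_sub_le {x : ℝ} (hx : 0 ≤ x) :
    |Real.exp (-x) - (1 - x)| ≤ x ^ 2 / 2 := by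
  have h1 : 1 - x ≤ Real.exp (-x) := by
    have := Real.add_one_le_exp (-x); linarith
  have h2 : Real.exp (-x) - (1 - x) ≤ x ^ 2 / 2 := by
    have hFTC := intervalIntegral.integral_eq_sub_of_hasDerivAt
      (f := fun s : ℝ => Real.exp (-s) - (1 - s)) (f' := fun s : ℝ => 1 - Real.exp (-s))
      (a := 0) (b := x) (fun s _ => by
        have := ((hasDerivAt_id s).neg.exp.sub ((hasDerivAt_const s 1).sub (hasDerivAt_id s)))
        refine this.congr_deriv ?_
        simp
        ring)
      (by apply Continuous.intervalIntegrable; fun_prop)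
    have hmono : ∫ s in (0:ℝ)..x, (1 - Real.exp (-s)) ≤ ∫ s in (0:ℝ)..x, s := by
      apply intervalIntegral.integral_mono_on hx
        (by apply Continuous.intervalIntegrable; fun_prop)
        (by apply Continuous.intervalIntegrable; fun_prop)
      intro t ht
      have := Real.add_one_le_exp (-t); linarith
    rw [hFTC] at hmono
    rw [integral_id] at hmono
    simp at hmono
    nlinarith
  rw [abs_of_nonneg (by linarith)]
  exact h2

lemma abs_pow_sub_pow_le_c (a b : ℂ) (M : ℝ) (ha : ‖a‖ ≤ M) (hb : ‖b‖ ≤ M) :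
    ∀ n : ℕ, ‖a ^ n - b ^ n‖ ≤ n * M ^ (n - 1) * ‖a - b‖ := by
  have hM : 0 ≤ M := le_trans (norm_nonneg a) ha
  intro n
  induction n with
  | zero => simp
  | succ m ih =>
    have key : a ^ (m + 1) - b ^ (m + 1) = a ^ m * (a - b) + (a ^ m - b ^ m) * b := by ring
    calc ‖a ^ (m + 1) - b ^ (m + 1)‖
        ≤ ‖a ^ m * (a - b)‖ + ‖(a ^ m - b ^ m) * b‖ := by
          rw [key]; exact norm_add_le _ _
      _ = ‖a‖ ^ m * ‖a - b‖ + ‖a ^ m - b ^ m‖ * ‖b‖ := by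
          rw [norm_mul, norm_mul, norm_pow]
      _ ≤ M ^ m * ‖a - b‖ + (m * M ^ (m - 1) * ‖a - b‖) * M := by
          gcongr
      _ ≤ (↑(m + 1)) * M ^ (m + 1 - 1) * ‖a - b‖ := by
          rcases Nat.eq_zero_or_pos m with rfl | hm
          · simp
          · have hpow : M ^ (m - 1) * M = M ^ m := by
              rw [← pow_succ]; congr 1; omega
            have e : (m : ℝ) * M ^ (m - 1) * ‖a - b‖ * M
                = (m : ℝ) * M ^ m * ‖a - b‖ := by
              rw [← hpow]; ring
            rw [e]
            push_cast
            nlinarith [norm_nonneg (a - b), pow_nonneg hM m,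
              mul_nonneg (pow_nonneg hM m) (norm_nonneg (a - b))]

lemma one_sub_cos_ge {t : ℝ} (ht : |t| ≤ π / 2) : 4 / π ^ 2 * t ^ 2 ≤ 1 - Real.cos t := by
  wlog ht0 : 0 ≤ t generalizing t
  · have := this (t := -t) (by rwa [abs_neg]) (by linarith [le_of_not_ge ht0])
    simpa using this
  rw [abs_of_nonneg ht0] at ht
  have hpi := Real.pi_pos
  have h2 : Real.sqrt 2 * t / π ≤ Real.sin (t / 2) := by
    have hcc := strictConcaveOn_sin_Icc.concaveOn
    have hb0 : 0 ≤ 2 * t / π := by positivity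
    have hb1 : 2 * t / π ≤ 1 := by
      rw [div_le_one hpi]; linarith
    have hmem1 : (0 : ℝ) ∈ Set.Icc 0 π := Set.left_mem_Icc.2 hpi.le
    have hmem2 : (π / 4 : ℝ) ∈ Set.Icc 0 π := by
      constructor <;> nlinarith
    have := hcc.2 hmem1 hmem2 (show (0:ℝ) ≤ 1 - 2 * t / π by linarith) hb0
      (show 1 - 2 * t / π + 2 * t / π = 1 by ring)
    simp only [smul_eq_mul, mul_zero, Real.sin_zero, zero_add, Real.sin_pi_div_four] at this
    have harg : (2 * t / π) * (π / 4) = t / 2 := by field_simp; ring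
    rw [harg] at this
    calc Real.sqrt 2 * t / π = 2 * t / π * (Real.sqrt 2 / 2) := by ring
      _ ≤ Real.sin (t / 2) := this
  have h3 : 2 * t ^ 2 / π ^ 2 ≤ Real.sin (t / 2) ^ 2 := by
    have hs2 : (Real.sqrt 2 * t / π) ^ 2 = 2 * t ^ 2 / π ^ 2 := by
      rw [div_pow, mul_pow, Real.sq_sqrt (by norm_num : (0:ℝ) ≤ 2)]
    rw [← hs2]
    apply pow_le_pow_left₀ (by positivity) h2
  have h4 : Real.sin (t / 2) ^ 2 = 1 / 2 - Real.cos t / 2 := by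
    rw [Real.sin_sq_eq_half_sub, show 2 * (t / 2) = t from by ring]
  rw [h4] at h3
  have hπ2 : (0:ℝ) < π ^ 2 := by positivity
  rw [div_le_iff₀ hπ2] at h3
  rw [div_mul_eq_mul_div, div_le_iff₀ hπ2]
  nlinarith

lemma abs_f_sq (p t : ℝ) :
    ‖(1 - p : ℂ) * Complex.exp (-Complex.I * t * p) +
      (p : ℂ) * Complex.exp (Complex.I * t * (1 - p))‖ ^ 2
    = (1 - p) ^ 2 + p ^ 2 + 2 * p * (1 - p) * Real.cos t := by
  have he1 : Complex.exp (-Complex.I * t * p) =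
      ((Real.cos (t * p) : ℝ) : ℂ) + ((-Real.sin (t * p) : ℝ) : ℂ) * Complex.I := by
    rw [show -Complex.I * (t : ℂ) * (p : ℂ) = ((-(t * p) : ℝ) : ℂ) * Complex.I by
      push_cast; ring]
    rw [Complex.exp_mul_I, ← Complex.ofReal_cos, ← Complex.ofReal_sin,
      Real.cos_neg, Real.sin_neg]
  have he2 : Complex.exp (Complex.I * t * (1 - p)) =
      ((Real.cos (t * (1 - p)) : ℝ) : ℂ) + ((Real.sin (t * (1 - p)) : ℝ) : ℂ) * Complex.I := by
    rw [show Complex.I * (t : ℂ) * ((1 : ℂ) - p) = (((t * (1 - p)) : ℝ) : ℂ) * Complex.I by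
      push_cast; ring]
    rw [Complex.exp_mul_I, ← Complex.ofReal_cos, ← Complex.ofReal_sin]
  have hz : (1 - p : ℂ) * Complex.exp (-Complex.I * t * p) +
      (p : ℂ) * Complex.exp (Complex.I * t * (1 - p)) =
      (((1 - p) * Real.cos (t * p) + p * Real.cos (t * (1 - p)) : ℝ) : ℂ) +
      ((-(1 - p) * Real.sin (t * p) + p * Real.sin (t * (1 - p)) : ℝ) : ℂ) * Complex.I := by
    rw [he1, he2]; push_cast; ring
  rw [hz, Complex.norm_add_mul_I, Real.sq_sqrt (by positivity)]
  have hcos : Real.cos (t * p) * Real.cos (t * (1 - p)) -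
      Real.sin (t * p) * Real.sin (t * (1 - p)) = Real.cos t := by
    rw [← Real.cos_add, show t * p + t * (1 - p) = t by ring]
  linear_combination ((1 - p) ^ 2) * (Real.sin_sq_add_cos_sq (t * p)) +
    (p ^ 2) * (Real.sin_sq_add_cos_sq (t * (1 - p))) + (2 * p * (1 - p)) * hcos

lemma int_t_gauss {b : ℝ} (hb : 0 < b) (a c : ℝ) :
    ∫ t in a..c, t * Real.exp (-b * t ^ 2) =
      (Real.exp (-b * a ^ 2) - Real.exp (-b * c ^ 2)) / (2 * b) := by
  have hFTC := intervalIntegral.integral_eq_sub_of_hasDerivAt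
    (f := fun t : ℝ => -Real.exp (-b * t ^ 2) / (2 * b))
    (f' := fun t : ℝ => t * Real.exp (-b * t ^ 2)) (a := a) (b := c)
    (fun t _ => by
      have h1 : HasDerivAt (fun t : ℝ => -b * t ^ 2) (-b * (2 * t)) t := by
        simpa using (hasDerivAt_pow 2 t).const_mul (-b)
      have := (h1.exp.neg).div_const (2 * b)
      refine this.congr_deriv ?_
      field_simp)
    (by apply Continuous.intervalIntegrable; fun_prop)
  rw [hFTC]
  field_simp
  ring

lemma J3_bound {A : ℝ} (hA : 0 < A) {c : ℝ} (hc : 0 ≤ c) :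
    ∫ t in (-c)..c, |t| ^ 3 * Real.exp (-A * t ^ 2) ≤ 1 / A ^ 2 := by
  set H : ℝ → ℝ := fun t => -(t ^ 2 / (2 * A) + 1 / (2 * A ^ 2)) * Real.exp (-A * t ^ 2) with hH
  have hd : ∀ t : ℝ, HasDerivAt H (t ^ 3 * Real.exp (-A * t ^ 2)) t := by
    intro t
    have h1 : HasDerivAt (fun t : ℝ => -(t ^ 2 / (2 * A) + 1 / (2 * A ^ 2)))
        (-(2 * t / (2 * A))) t := by
      have := ((hasDerivAt_pow 2 t).div_const (2 * A)).add_const (1 / (2 * A ^ 2))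
      exact this.neg.congr_deriv (by norm_num)
    have h2 : HasDerivAt (fun t : ℝ => Real.exp (-A * t ^ 2)) (-A * (2 * t) * Real.exp (-A * t ^ 2)) t := by
      have h3 : HasDerivAt (fun t : ℝ => -A * t ^ 2) (-A * (2 * t)) t := by
        simpa using (hasDerivAt_pow 2 t).const_mul (-A)
      simpa [mul_comm] using h3.exp
    have := h1.mul h2
    refine this.congr_deriv ?_
    field_simp
    ring
  have hint : ∀ u v : ℝ, ∫ t in u..v, t ^ 3 * Real.exp (-A * t ^ 2) = H v - H u := fun u v =>
    intervalIntegral.integral_eq_sub_of_hasDerivAt (fun t _ => hd t)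
      (by apply Continuous.intervalIntegrable; fun_prop)
  have hsplit : ∫ t in (-c)..c, |t| ^ 3 * Real.exp (-A * t ^ 2) =
      (∫ t in (-c)..(0:ℝ), |t| ^ 3 * Real.exp (-A * t ^ 2)) +
      ∫ t in (0:ℝ)..c, |t| ^ 3 * Real.exp (-A * t ^ 2) := by
    rw [intervalIntegral.integral_add_adjacent_intervals] <;>
      · apply Continuous.intervalIntegrable
        exact ((continuous_abs.pow 3).mul (by fun_prop))
  have hleft : ∫ t in (-c)..(0:ℝ), |t| ^ 3 * Real.exp (-A * t ^ 2) = H (-c) - H 0 := by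
    rw [intervalIntegral.integral_congr (g := fun t => -(t ^ 3 * Real.exp (-A * t ^ 2)))
      (fun t ht => ?_), intervalIntegral.integral_neg, hint]
    · ring
    · rw [Set.uIcc_of_le (by linarith : -c ≤ (0:ℝ))] at ht
      have ht0 : t ≤ 0 := ht.2
      rw [abs_of_nonpos ht0]
      ring
  have hright : ∫ t in (0:ℝ)..c, |t| ^ 3 * Real.exp (-A * t ^ 2) = H c - H 0 := by
    rw [intervalIntegral.integral_congr (g := fun t => t ^ 3 * Real.exp (-A * t ^ 2))
      (fun t ht => ?_), hint]
    · rw [Set.uIcc_of_le hc] at ht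
      rw [abs_of_nonneg ht.1]
  have hH0 : H 0 = -(1 / (2 * A ^ 2)) := by simp [hH]
  have hHc : H c ≤ 0 := by
    apply mul_nonpos_of_nonpos_of_nonneg
    · have : 0 ≤ c ^ 2 / (2 * A) + 1 / (2 * A ^ 2) := by positivity
      linarith
    · positivity
  have hHnc : H (-c) ≤ 0 := by
    apply mul_nonpos_of_nonpos_of_nonneg
    · have : 0 ≤ (-c) ^ 2 / (2 * A) + 1 / (2 * A ^ 2) := by positivity
      linarith
    · positivity
  rw [hsplit, hleft, hright, hH0]
  have : 1 / (2 * A ^ 2) + 1 / (2 * A ^ 2) = 1 / A ^ 2 := by field_simp; ring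
  linarith

lemma J4_bound {A : ℝ} (hA : 0 < A) {c : ℝ} (hc : 0 ≤ c) :
    ∫ t in (-c)..c, t ^ 4 * Real.exp (-A * t ^ 2) ≤ 3 / (4 * A ^ 2) * Real.sqrt (π / A) := by
  set G : ℝ → ℝ := fun t => -(t ^ 3 / (2 * A) + 3 * t / (4 * A ^ 2)) * Real.exp (-A * t ^ 2) with hG
  have hd : ∀ t : ℝ, HasDerivAt G
      (t ^ 4 * Real.exp (-A * t ^ 2) - 3 / (4 * A ^ 2) * Real.exp (-A * t ^ 2)) t := by
    intro t
    have h1 : HasDerivAt (fun t : ℝ => -(t ^ 3 / (2 * A) + 3 * t / (4 * A ^ 2)))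
        (-(3 * t ^ 2 / (2 * A) + 3 / (4 * A ^ 2))) t := by
      have ha := (hasDerivAt_pow 3 t).div_const (2 * A)
      have hb := (hasDerivAt_id t).const_mul (3 / (4 * A ^ 2))
      have := (ha.add (by simpa [mul_comm, mul_div_assoc] using hb)).neg
      refine (this.congr_of_eventuallyEq (Filter.Eventually.of_forall fun x => ?_)).congr_deriv ?_
      · simp; ring
      · norm_num; ring
    have h2 : HasDerivAt (fun t : ℝ => Real.exp (-A * t ^ 2)) (-A * (2 * t) * Real.exp (-A * t ^ 2)) t := by
      have h3 : HasDerivAt (fun t : ℝ => -A * t ^ 2) (-A * (2 * t)) t := by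
        simpa using (hasDerivAt_pow 2 t).const_mul (-A)
      simpa [mul_comm] using h3.exp
    have := h1.mul h2
    refine this.congr_deriv ?_
    field_simp
    ring
  have hFTC : ∫ t in (-c)..c,
      (t ^ 4 * Real.exp (-A * t ^ 2) - 3 / (4 * A ^ 2) * Real.exp (-A * t ^ 2)) = G c - G (-c) :=
    intervalIntegral.integral_eq_sub_of_hasDerivAt (fun t _ => hd t)
      (by apply Continuous.intervalIntegrable; fun_prop)
  have hsub : ∫ t in (-c)..c,
      (t ^ 4 * Real.exp (-A * t ^ 2) - 3 / (4 * A ^ 2) * Real.exp (-A * t ^ 2))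
      = (∫ t in (-c)..c, t ^ 4 * Real.exp (-A * t ^ 2))
        - 3 / (4 * A ^ 2) * ∫ t in (-c)..c, Real.exp (-A * t ^ 2) := by
    rw [intervalIntegral.integral_sub (by apply Continuous.intervalIntegrable; fun_prop)
      (by apply Continuous.intervalIntegrable; fun_prop), intervalIntegral.integral_const_mul]
  have hGodd : G (-c) = -G c := by simp [hG]; ring
  have hGc : G c ≤ 0 := by
    apply mul_nonpos_of_nonpos_of_nonneg
    · have : 0 ≤ c ^ 3 / (2 * A) + 3 * c / (4 * A ^ 2) := by positivity
      linarith
    · positivity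
  have hgauss : ∫ t in (-c)..c, Real.exp (-A * t ^ 2) ≤ Real.sqrt (π / A) := by
    rw [intervalIntegral.integral_of_le (by linarith), ← integral_gaussian A]
    apply setIntegral_le_integral (integrable_exp_neg_mul_sq hA)
    filter_upwards with x using (Real.exp_pos _).le
  have h34 : (0:ℝ) ≤ 3 / (4 * A ^ 2) := by positivity
  have := hFTC
  rw [hsub] at this
  have : (∫ t in (-c)..c, t ^ 4 * Real.exp (-A * t ^ 2))
      = G c - G (-c) + 3 / (4 * A ^ 2) * ∫ t in (-c)..c, Real.exp (-A * t ^ 2) := by linarith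
  rw [this, hGodd]
  have h2 : 3 / (4 * A ^ 2) * (∫ t in (-c)..c, Real.exp (-A * t ^ 2))
      ≤ 3 / (4 * A ^ 2) * Real.sqrt (π / A) := by
    apply mul_le_mul_of_nonneg_left hgauss h34
  linarith
set_option maxHeartbeats 2000000 in
/-- For `0 < p < 1`, `q = 1 − p`, `f(t) = q e^{−itp} + p e^{itq}`, `σ² = npq`,
and `n ≥ 2`:
`∫_{|t| ≤ π} |f(t)ⁿ − e^{−npqt²/2}| dt
   < (1/σ²)(f(p,n) + πσ²e^{−σ²} + (4/π)e^{−π²σ²/8})`,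
where `f(p,n) = (p²+q²)(π⁴/96)(n/(n−1))² + (3π⁵√(πpq)/(2¹⁰√n))(n/(n−1))^{5/2}`. -/
theorem charfun_power_minus_gaussian_integral_bound
    (p : ℝ) (hp : p ∈ Set.Ioo (0 : ℝ) 1) (n : ℕ) (hn : 2 ≤ n)
    (f : ℝ → ℂ)
    (hf : ∀ t : ℝ, f t =
      (1 - p : ℂ) * Complex.exp (-Complex.I * t * p) +
        (p : ℂ) * Complex.exp (Complex.I * t * (1 - p))) :
    (∫ t in Set.Icc (-Real.pi) Real.pi,
        ‖f t ^ n - (Real.exp (-(n * p * (1 - p) * t ^ 2) / 2) : ℂ)‖) <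
      (1 / (n * p * (1 - p))) *
        (((p ^ 2 + (1 - p) ^ 2) * (Real.pi ^ 4 / 96) * ((n : ℝ) / (n - 1)) ^ 2 +
            (3 * Real.pi ^ 5 * Real.sqrt (Real.pi * p * (1 - p)) /
              (2 ^ 10 * Real.sqrt n)) * ((n : ℝ) / (n - 1)) ^ ((5 : ℝ) / 2)) +
          Real.pi * (n * p * (1 - p)) * Real.exp (-(n * p * (1 - p))) +
          (4 / Real.pi) * Real.exp (-Real.pi ^ 2 * (n * p * (1 - p)) / 8)) := by
  obtain ⟨hp0, hp1⟩ := hp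
  have hq0 : (0:ℝ) < 1 - p := by linarith
  have hπ := Real.pi_pos
  have hπ3 := Real.pi_gt_three
  have hπ8 : (8:ℝ) ≤ π ^ 2 := by nlinarith
  have hs0 : (0:ℝ) < p * (1 - p) := mul_pos hp0 hq0
  have hs4 : p * (1 - p) ≤ 1 / 4 := by nlinarith [sq_nonneg (p - 1/2)]
  have hn2 : (2:ℝ) ≤ (n:ℝ) := by exact_mod_cast hn
  have hn1 : (0:ℝ) < (n:ℝ) - 1 := by linarith
  have hn0 : (0:ℝ) < (n:ℝ) := by linarith
  have hσ0 : (0:ℝ) < (n:ℝ) * p * (1 - p) := by positivity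
  set A : ℝ := ((n:ℝ) - 1) * (4 * (p * (1 - p))) / π ^ 2 with hA_def
  have hA0 : 0 < A := by
    apply div_pos (mul_pos hn1 (by positivity)) (by positivity)
  have hfc : Continuous f := by
    rw [show f = _ from funext hf]
    fun_prop
  set K : ℝ → ℝ := fun t =>
    ‖f t ^ n - (Real.exp (-((n:ℝ) * p * (1 - p) * t ^ 2) / 2) : ℂ)‖ with hK_def
  have hKc : Continuous K := by
    apply continuous_norm.comp
    apply (hfc.pow n).sub
    apply Complex.continuous_ofReal.comp
    fun_prop
  have hKnn : ∀ t, 0 ≤ K t := fun t => norm_nonneg _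
  -- pointwise bound on the middle range
  have hmid_pt : ∀ t : ℝ, |t| ≤ π / 2 →
      K t ≤ (n:ℝ) * ((p * (1 - p)) * (p ^ 2 + (1 - p) ^ 2) / 6) * (|t| ^ 3 * Real.exp (-A * t ^ 2))
          + (n:ℝ) * ((p * (1 - p)) ^ 2 / 8) * (t ^ 4 * Real.exp (-A * t ^ 2)) := by
    intro t ht
    set g : ℝ := Real.exp (-(p * (1 - p) * t ^ 2) / 2) with hg_def
    set M : ℝ := Real.exp (-(4 * (p * (1 - p)) / π ^ 2) * t ^ 2) with hM_def
    have hgpos : 0 < g := Real.exp_pos _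
    have habsz2 : ‖f t‖ ^ 2 = 1 - 2 * (p * (1 - p)) * (1 - Real.cos t) := by
      rw [hf t, abs_f_sq]; ring
    have hcos := one_sub_cos_ge ht
    have habsz : ‖f t‖ ≤ M := by
      apply le_of_pow_le_pow_left₀ two_ne_zero (Real.exp_pos _).le
      rw [habsz2]
      have hM2 : M ^ 2 = Real.exp (-(8 * (p * (1 - p)) / π ^ 2) * t ^ 2) := by
        rw [hM_def, sq, ← Real.exp_add]
        congr 1; ring
      rw [hM2]
      have h8 : -(8 * (p * (1 - p)) / π ^ 2) * t ^ 2 + 1 ≤ Real.exp (-(8 * (p * (1 - p)) / π ^ 2) * t ^ 2) :=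
        Real.add_one_le_exp _
      have hmul : 2 * (p * (1 - p)) * (4 / π ^ 2 * t ^ 2) ≤ 2 * (p * (1 - p)) * (1 - Real.cos t) := by
        apply mul_le_mul_of_nonneg_left hcos (by positivity)
      have hre : 2 * (p * (1 - p)) * (4 / π ^ 2 * t ^ 2) = 8 * (p * (1 - p)) / π ^ 2 * t ^ 2 := by
        ring
      linarith
    have hg_le : g ≤ M := by
      rw [hg_def, hM_def]
      apply Real.exp_le_exp.2
      have ht2 : 0 ≤ t ^ 2 := sq_nonneg t
      have : 4 * (p * (1 - p)) / π ^ 2 ≤ p * (1 - p) / 2 := by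
        rw [div_le_div_iff₀ (by positivity) (by norm_num)]
        nlinarith
      calc -(4 * (p * (1 - p)) / π ^ 2) * t ^ 2 ≥ -(p * (1 - p) / 2) * t ^ 2 := by nlinarith
        _ = -(p * (1 - p) * t ^ 2) / 2 := by ring
    -- bound on |f t - g|
    have hdiff : ‖f t - (g:ℂ)‖ ≤
        (p * (1 - p)) * (p ^ 2 + (1 - p) ^ 2) * |t| ^ 3 / 6 + (p * (1 - p)) ^ 2 * t ^ 4 / 8 := by
      have htri : ‖f t - (g:ℂ)‖ ≤
          ‖f t - ((1 - p * (1 - p) * t ^ 2 / 2 : ℝ) : ℂ)‖ +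
          ‖((1 - p * (1 - p) * t ^ 2 / 2 : ℝ) : ℂ) - (g:ℂ)‖ :=
        norm_sub_le_norm_sub_add_norm_sub _ _ _
      have h1 : ‖f t - ((1 - p * (1 - p) * t ^ 2 / 2 : ℝ) : ℂ)‖ ≤
          (p * (1 - p)) * (p ^ 2 + (1 - p) ^ 2) * |t| ^ 3 / 6 := by
        have hkey : f t - ((1 - p * (1 - p) * t ^ 2 / 2 : ℝ) : ℂ) =
            ((1 - p : ℝ) : ℂ) * (Complex.exp (Complex.I * ((-(t*p) : ℝ) : ℂ)) - 1 -
              Complex.I * ((-(t*p) : ℝ) : ℂ) + ((-(t*p) : ℝ) : ℂ) ^ 2 / 2) +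
            ((p : ℝ) : ℂ) * (Complex.exp (Complex.I * ((t*(1-p) : ℝ) : ℂ)) - 1 -
              Complex.I * ((t*(1-p) : ℝ) : ℂ) + ((t*(1-p) : ℝ) : ℂ) ^ 2 / 2) := by
          rw [hf t,
            show (-Complex.I * (t:ℂ) * (p:ℂ)) = Complex.I * ((-(t*p) : ℝ) : ℂ) by push_cast; ring,
            show (Complex.I * (t:ℂ) * ((1:ℂ) - (p:ℂ))) = Complex.I * ((t*(1-p) : ℝ) : ℂ) by push_cast; ring]
          push_cast
          ring
        rw [hkey]
        calc ‖_‖ ≤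
            ‖((1 - p : ℝ) : ℂ) * (Complex.exp (Complex.I * ((-(t*p) : ℝ) : ℂ)) - 1 -
              Complex.I * ((-(t*p) : ℝ) : ℂ) + ((-(t*p) : ℝ) : ℂ) ^ 2 / 2)‖ +
            ‖((p : ℝ) : ℂ) * (Complex.exp (Complex.I * ((t*(1-p) : ℝ) : ℂ)) - 1 -
              Complex.I * ((t*(1-p) : ℝ) : ℂ) + ((t*(1-p) : ℝ) : ℂ) ^ 2 / 2)‖ :=
            norm_add_le _ _
          _ ≤ (1 - p) * (|(-(t*p))| ^ 3 / 6) + p * (|t*(1-p)| ^ 3 / 6) := by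
            rw [norm_mul, norm_mul, Complex.norm_real, Real.norm_eq_abs, Complex.norm_real, Real.norm_eq_abs,
              abs_of_pos hq0, abs_of_pos hp0]
            apply add_le_add
            · exact mul_le_mul_of_nonneg_left (abs_cexp_third _) hq0.le
            · exact mul_le_mul_of_nonneg_left (abs_cexp_third _) hp0.le
          _ = (p * (1 - p)) * (p ^ 2 + (1 - p) ^ 2) * |t| ^ 3 / 6 := by
            rw [abs_neg, abs_mul, abs_mul, abs_of_pos hp0, abs_of_pos hq0]
            ring
      have h2 : ‖((1 - p * (1 - p) * t ^ 2 / 2 : ℝ) : ℂ) - (g:ℂ)‖ ≤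
          (p * (1 - p)) ^ 2 * t ^ 4 / 8 := by
        rw [← Complex.ofReal_sub, Complex.norm_real, Real.norm_eq_abs]
        have hgx : g = Real.exp (-(p * (1 - p) * t ^ 2 / 2)) := by
          rw [hg_def]; congr 1; ring
        rw [hgx, abs_sub_comm]
        calc |Real.exp (-(p * (1 - p) * t ^ 2 / 2)) - (1 - p * (1 - p) * t ^ 2 / 2)| ≤
            (p * (1 - p) * t ^ 2 / 2) ^ 2 / 2 := exp_neg_sub_one_sub_le (by positivity)
          _ = (p * (1 - p)) ^ 2 * t ^ 4 / 8 := by ring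
      calc ‖f t - (g:ℂ)‖ ≤ _ + _ := htri
        _ ≤ (p * (1 - p)) * (p ^ 2 + (1 - p) ^ 2) * |t| ^ 3 / 6 + (p * (1 - p)) ^ 2 * t ^ 4 / 8 :=
          add_le_add h1 h2
    -- telescoping
    have hgn : ((Real.exp (-((n:ℝ) * p * (1 - p) * t ^ 2) / 2) : ℝ) : ℂ) = ((g : ℝ) : ℂ) ^ n := by
      rw [← Complex.ofReal_pow]
      congr 1
      rw [hg_def, ← Real.exp_nat_mul]
      congr 1
      ring
    have htel := abs_pow_sub_pow_le_c (f t) ((g:ℝ):ℂ) M habsz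
      (by rwa [Complex.norm_real, Real.norm_eq_abs, abs_of_pos hgpos]) n
    have hMn : M ^ (n - 1) = Real.exp (-A * t ^ 2) := by
      rw [hM_def, ← Real.exp_nat_mul]
      congr 1
      rw [Nat.cast_sub (by omega : 1 ≤ n)]
      rw [hA_def]
      push_cast
      field_simp
    have hKt : K t = ‖f t ^ n - ((g : ℝ) : ℂ) ^ n‖ := by
      simp only [hK_def]
      rw [hgn]
    calc K t = ‖f t ^ n - ((g : ℝ) : ℂ) ^ n‖ := hKt
      _ ≤ (n:ℝ) * M ^ (n - 1) * ‖f t - (g:ℂ)‖ := htel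
      _ = (n:ℝ) * Real.exp (-A * t ^ 2) * ‖f t - (g:ℂ)‖ := by rw [hMn]
      _ ≤ (n:ℝ) * Real.exp (-A * t ^ 2) *
          ((p * (1 - p)) * (p ^ 2 + (1 - p) ^ 2) * |t| ^ 3 / 6 + (p * (1 - p)) ^ 2 * t ^ 4 / 8) := by
        apply mul_le_mul_of_nonneg_left hdiff (by positivity)
      _ = (n:ℝ) * ((p * (1 - p)) * (p ^ 2 + (1 - p) ^ 2) / 6) * (|t| ^ 3 * Real.exp (-A * t ^ 2))
          + (n:ℝ) * ((p * (1 - p)) ^ 2 / 8) * (t ^ 4 * Real.exp (-A * t ^ 2)) := by ring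
  -- middle integral bound
  have hBint1 : IntervalIntegrable (fun t : ℝ => |t| ^ 3 * Real.exp (-A * t ^ 2)) volume (-(π/2)) (π/2) :=
    ((continuous_abs.pow 3).mul (by fun_prop)).intervalIntegrable _ _
  have hBint2 : IntervalIntegrable (fun t : ℝ => t ^ 4 * Real.exp (-A * t ^ 2)) volume (-(π/2)) (π/2) :=
    (Continuous.intervalIntegrable (by fun_prop) _ _)
  have hc1nn : (0:ℝ) ≤ (n:ℝ) * ((p * (1 - p)) * (p ^ 2 + (1 - p) ^ 2) / 6) := by positivity
  have hc2nn : (0:ℝ) ≤ (n:ℝ) * ((p * (1 - p)) ^ 2 / 8) := by positivity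
  have hIM : (∫ t in (-(π/2))..(π/2), K t) ≤
      (n:ℝ) * ((p * (1 - p)) * (p ^ 2 + (1 - p) ^ 2) / 6) * (1 / A ^ 2)
      + (n:ℝ) * ((p * (1 - p)) ^ 2 / 8) * (3 / (4 * A ^ 2) * Real.sqrt (π / A)) := by
    have hmono : (∫ t in (-(π/2))..(π/2), K t) ≤
        ∫ t in (-(π/2))..(π/2),
          ((n:ℝ) * ((p * (1 - p)) * (p ^ 2 + (1 - p) ^ 2) / 6) * (|t| ^ 3 * Real.exp (-A * t ^ 2))
          + (n:ℝ) * ((p * (1 - p)) ^ 2 / 8) * (t ^ 4 * Real.exp (-A * t ^ 2))) := by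
      apply intervalIntegral.integral_mono_on (by linarith) (hKc.intervalIntegrable _ _)
        ((hBint1.const_mul _).add (hBint2.const_mul _))
      intro t ht
      exact hmid_pt t (abs_le.2 ⟨ht.1, ht.2⟩)
    rw [intervalIntegral.integral_add (hBint1.const_mul _) (hBint2.const_mul _),
      intervalIntegral.integral_const_mul, intervalIntegral.integral_const_mul] at hmono
    have h3 := J3_bound hA0 (show (0:ℝ) ≤ π/2 by linarith)
    have h4 := J4_bound hA0 (show (0:ℝ) ≤ π/2 by linarith)
    have h3' := mul_le_mul_of_nonneg_left h3 hc1nn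
    have h4' := mul_le_mul_of_nonneg_left h4 hc2nn
    linarith
  -- tail pointwise bounds
  have h12s : (0:ℝ) ≤ 1 - 2*(p*(1-p)) := by linarith
  set r : ℝ := Real.sqrt (1 - 2*(p*(1-p))) with hr_def
  have hr0 : 0 ≤ r := Real.sqrt_nonneg _
  have habs_tail : ∀ t : ℝ, Real.cos t ≤ 0 → ‖f t‖ ≤ r := by
    intro t hct
    have habsz2 : ‖f t‖ ^ 2 = 1 - 2 * (p * (1 - p)) * (1 - Real.cos t) := by
      rw [hf t, abs_f_sq]; ring
    apply le_of_pow_le_pow_left₀ two_ne_zero hr0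
    rw [habsz2, hr_def, Real.sq_sqrt h12s]
    have hexpand : 1 - 2*(p*(1-p))*(1-Real.cos t)
        = 1 - 2*(p*(1-p)) + 2*((p*(1-p))*Real.cos t) := by ring
    have hprod : (p*(1-p))*Real.cos t ≤ 0 := mul_nonpos_of_nonneg_of_nonpos hs0.le hct
    linarith
  set b2 : ℝ := (n:ℝ) * (p * (1 - p)) / 2 with hb2_def
  have hb20 : 0 < b2 := by
    rw [hb2_def]; exact div_pos (mul_pos hn0 hs0) two_pos
  have hexp_eq : ∀ t : ℝ, Real.exp (-((n:ℝ) * p * (1 - p) * t ^ 2) / 2) = Real.exp (-b2 * t ^ 2) := by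
    intro t; congr 1; rw [hb2_def]; ring
  have htri_tail : ∀ t : ℝ, K t ≤ ‖f t‖ ^ n + Real.exp (-b2 * t ^ 2) := by
    intro t
    have hKt : K t = ‖f t ^ n - ((Real.exp (-b2 * t ^ 2) : ℝ) : ℂ)‖ := by
      simp only [hK_def]
      rw [hexp_eq t]
    rw [hKt]
    have htri := norm_sub_le (f t ^ n) ((Real.exp (-b2 * t ^ 2) : ℝ) : ℂ)
    calc ‖f t ^ n - ((Real.exp (-b2 * t ^ 2) : ℝ) : ℂ)‖
        ≤ ‖f t ^ n‖ + ‖((Real.exp (-b2 * t ^ 2) : ℝ) : ℂ)‖ := htri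
      _ = ‖f t‖ ^ n + Real.exp (-b2 * t ^ 2) := by
        rw [norm_pow, Complex.norm_real, Real.norm_eq_abs, abs_of_pos (Real.exp_pos _)]
  have htail_pt_right : ∀ t ∈ Set.Icc (π/2) π,
      K t ≤ r ^ n + 2/π * (t * Real.exp (-b2 * t ^ 2)) := by
    intro t ht
    have hct : Real.cos t ≤ 0 :=
      Real.cos_nonpos_of_pi_div_two_le_of_le ht.1 (by linarith [ht.2])
    have h2 : ‖f t‖ ^ n ≤ r ^ n :=
      pow_le_pow_left₀ (norm_nonneg _) (habs_tail t hct) n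
    have hco : 1 ≤ 2/π * t := by
      rw [div_mul_eq_mul_div, le_div_iff₀ hπ]; linarith [ht.1]
    have h3 : Real.exp (-b2 * t ^ 2) ≤ 2/π * (t * Real.exp (-b2 * t ^ 2)) := by
      calc Real.exp (-b2 * t ^ 2) = 1 * Real.exp (-b2 * t ^ 2) := (one_mul _).symm
        _ ≤ (2/π * t) * Real.exp (-b2 * t ^ 2) :=
          mul_le_mul_of_nonneg_right hco (Real.exp_pos _).le
        _ = 2/π * (t * Real.exp (-b2 * t ^ 2)) := by ring
    linarith [htri_tail t]
  have htail_pt_left : ∀ t ∈ Set.Icc (-π) (-(π/2)),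
      K t ≤ r ^ n + 2/π * -(t * Real.exp (-b2 * t ^ 2)) := by
    intro t ht
    have hct : Real.cos t ≤ 0 := by
      rw [← Real.cos_neg]
      exact Real.cos_nonpos_of_pi_div_two_le_of_le (by linarith [ht.2]) (by linarith [ht.1])
    have h2 : ‖f t‖ ^ n ≤ r ^ n :=
      pow_le_pow_left₀ (norm_nonneg _) (habs_tail t hct) n
    have hco : 1 ≤ 2/π * (-t) := by
      rw [div_mul_eq_mul_div, le_div_iff₀ hπ]; linarith [ht.2]
    have h3 : Real.exp (-b2 * t ^ 2) ≤ 2/π * -(t * Real.exp (-b2 * t ^ 2)) := by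
      calc Real.exp (-b2 * t ^ 2) = 1 * Real.exp (-b2 * t ^ 2) := (one_mul _).symm
        _ ≤ (2/π * (-t)) * Real.exp (-b2 * t ^ 2) :=
          mul_le_mul_of_nonneg_right hco (Real.exp_pos _).le
        _ = 2/π * -(t * Real.exp (-b2 * t ^ 2)) := by ring
    linarith [htri_tail t]
  -- tail integrals
  have hIR : (∫ t in (π/2)..π, K t) ≤ (π/2) * r ^ n +
      2/π * ((Real.exp (-b2 * (π/2) ^ 2) - Real.exp (-b2 * π ^ 2)) / (2 * b2)) := by
    have hmono : (∫ t in (π/2)..π, K t) ≤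
        ∫ t in (π/2)..π, (r ^ n + 2/π * (t * Real.exp (-b2 * t ^ 2))) := by
      apply intervalIntegral.integral_mono_on (by linarith) (hKc.intervalIntegrable _ _)
        (intervalIntegrable_const.add
          (((Continuous.intervalIntegrable (by fun_prop) _ _)).const_mul _))
      exact htail_pt_right
    rw [intervalIntegral.integral_add intervalIntegrable_const
        (((Continuous.intervalIntegrable (by fun_prop) _ _)).const_mul _),
      intervalIntegral.integral_const, intervalIntegral.integral_const_mul,
      int_t_gauss hb20] at hmono
    have : (π - π/2) • (r ^ n) = (π/2) * r ^ n := by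
      rw [smul_eq_mul]; ring
    linarith [hmono, this.le, this.ge]
  have hIL : (∫ t in (-π)..(-(π/2)), K t) ≤ (π/2) * r ^ n +
      2/π * ((Real.exp (-b2 * (π/2) ^ 2) - Real.exp (-b2 * π ^ 2)) / (2 * b2)) := by
    have hmono : (∫ t in (-π)..(-(π/2)), K t) ≤
        ∫ t in (-π)..(-(π/2)), (r ^ n + 2/π * -(t * Real.exp (-b2 * t ^ 2))) := by
      apply intervalIntegral.integral_mono_on (by linarith) (hKc.intervalIntegrable _ _)
        (intervalIntegrable_const.add
          (((Continuous.intervalIntegrable (by fun_prop) _ _)).const_mul _))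
      exact htail_pt_left
    rw [intervalIntegral.integral_add intervalIntegrable_const
        (((Continuous.intervalIntegrable (by fun_prop) _ _)).const_mul _),
      intervalIntegral.integral_const, intervalIntegral.integral_const_mul,
      intervalIntegral.integral_neg, int_t_gauss hb20] at hmono
    have he1 : ((-π:ℝ)) ^ 2 = π ^ 2 := by ring
    have he2 : ((-(π/2):ℝ)) ^ 2 = (π/2) ^ 2 := by ring
    rw [he1, he2] at hmono
    have hs' : ((-(π/2)) - (-π)) • (r ^ n) = (π/2) * r ^ n := by
      rw [smul_eq_mul]; ring
    rw [hs'] at hmono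
    have harr : 2/π * -((Real.exp (-b2 * π ^ 2) - Real.exp (-b2 * (π/2) ^ 2)) / (2 * b2))
        = 2/π * ((Real.exp (-b2 * (π/2) ^ 2) - Real.exp (-b2 * π ^ 2)) / (2 * b2)) := by
      ring
    linarith [hmono, harr.le, harr.ge]
  -- splitting
  have hsplit : (∫ t in Set.Icc (-π) π, K t) =
      (∫ t in (-π)..(-(π/2)), K t) + (∫ t in (-(π/2))..(π/2), K t) + (∫ t in (π/2)..π, K t) := by
    rw [MeasureTheory.integral_Icc_eq_integral_Ioc,
      ← intervalIntegral.integral_of_le (by linarith : -π ≤ π),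
      ← intervalIntegral.integral_add_adjacent_intervals
        (hKc.intervalIntegrable (-π) (-(π/2))) (hKc.intervalIntegrable (-(π/2)) π),
      ← intervalIntegral.integral_add_adjacent_intervals
        (hKc.intervalIntegrable (-(π/2)) (π/2)) (hKc.intervalIntegrable (π/2) π)]
    ring
  -- strict bound for r^n
  have hrlt : r ^ n < Real.exp (-((n:ℝ) * p * (1 - p))) := by
    have h1 : r < Real.exp (-(p * (1 - p))) := by
      apply lt_of_pow_lt_pow_left₀ 2 (Real.exp_pos _).le
      rw [hr_def, Real.sq_sqrt h12s]
      have h2 : Real.exp (-(p*(1-p))) ^ 2 = Real.exp (-(2*(p*(1-p)))) := by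
        rw [sq, ← Real.exp_add]; congr 1; ring
      rw [h2]
      have := Real.add_one_lt_exp (x := -(2*(p*(1-p)))) (by nlinarith)
      linarith
    calc r ^ n < Real.exp (-(p*(1-p))) ^ n := pow_lt_pow_left₀ h1 hr0 (by omega)
      _ = Real.exp (-((n:ℝ) * p * (1 - p))) := by
        rw [← Real.exp_nat_mul]; congr 1; ring
  -- algebraic identities
  have hπne : π ≠ 0 := ne_of_gt hπ
  have hn1ne : (n:ℝ) - 1 ≠ 0 := ne_of_gt hn1
  have hnne : (n:ℝ) ≠ 0 := ne_of_gt hn0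
  have hpne : p ≠ 0 := ne_of_gt hp0
  have hqne : (1:ℝ) - p ≠ 0 := ne_of_gt hq0
  have hAne : A ≠ 0 := ne_of_gt hA0
  have heq1 : (n:ℝ) * ((p * (1 - p)) * (p ^ 2 + (1 - p) ^ 2) / 6) * (1 / A ^ 2)
      = (1 / ((n:ℝ) * p * (1 - p))) *
        ((p ^ 2 + (1 - p) ^ 2) * (π ^ 4 / 96) * ((n:ℝ) / ((n:ℝ) - 1)) ^ 2) := by
    rw [hA_def, div_pow, one_div_div, div_pow]
    field_simp
    ring
  have hX0 : (0:ℝ) ≤ (n:ℝ) / ((n:ℝ) - 1) := div_nonneg hn0.le hn1.le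
  have hX2 : (((n:ℝ) / ((n:ℝ) - 1)) ^ ((5:ℝ)/2)) ^ 2 = ((n:ℝ) / ((n:ℝ) - 1)) ^ (5:ℕ) := by
    rw [← Real.rpow_natCast (((n:ℝ) / ((n:ℝ) - 1)) ^ ((5:ℝ)/2)) 2, ← Real.rpow_mul hX0,
      show ((5:ℝ)/2 * ((2:ℕ):ℝ)) = ((5:ℕ):ℝ) by norm_num, Real.rpow_natCast]
  have hsqrtπA : Real.sqrt (π/A) ^ 2 = π / A := Real.sq_sqrt (by positivity)
  have hsqrtps : Real.sqrt (π * p * (1-p)) ^ 2 = π * p * (1-p) := Real.sq_sqrt (by positivity)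
  have hsqrtn : Real.sqrt (n:ℝ) ^ 2 = (n:ℝ) := Real.sq_sqrt hn0.le
  have hsqrtn0 : (0:ℝ) < Real.sqrt (n:ℝ) := Real.sqrt_pos.2 hn0
  have hXnn : (0:ℝ) ≤ ((n:ℝ) / ((n:ℝ) - 1)) ^ ((5:ℝ)/2) := Real.rpow_nonneg hX0 _
  have hL0 : (0:ℝ) ≤ (n:ℝ) * ((p * (1 - p)) ^ 2 / 8) * (3 / (4 * A ^ 2) * Real.sqrt (π / A)) := by
    positivity
  have hR0 : (0:ℝ) ≤ (1 / ((n:ℝ) * p * (1 - p))) *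
      (3 * π ^ 5 * Real.sqrt (π * p * (1 - p)) / (2 ^ 10 * Real.sqrt (n:ℝ)) *
        ((n:ℝ) / ((n:ℝ) - 1)) ^ ((5:ℝ)/2)) := by
    apply mul_nonneg (by positivity)
    apply mul_nonneg (by positivity) hXnn
  have heq2 : (n:ℝ) * ((p * (1 - p)) ^ 2 / 8) * (3 / (4 * A ^ 2) * Real.sqrt (π / A))
      = (1 / ((n:ℝ) * p * (1 - p))) *
        (3 * π ^ 5 * Real.sqrt (π * p * (1 - p)) / (2 ^ 10 * Real.sqrt (n:ℝ)) *
          ((n:ℝ) / ((n:ℝ) - 1)) ^ ((5:ℝ)/2)) := by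
    have e1 : ((n:ℝ) * ((p * (1 - p)) ^ 2 / 8) * (3 / (4 * A ^ 2) * Real.sqrt (π / A))) ^ 2
        = ((n:ℝ) * ((p * (1 - p)) ^ 2 / 8)) ^ 2 * (3 / (4 * A ^ 2)) ^ 2 * (Real.sqrt (π / A)) ^ 2 := by
      ring
    rw [hsqrtπA] at e1
    have e2 : ((1 / ((n:ℝ) * p * (1 - p))) *
        (3 * π ^ 5 * Real.sqrt (π * p * (1 - p)) / (2 ^ 10 * Real.sqrt (n:ℝ)) *
          ((n:ℝ) / ((n:ℝ) - 1)) ^ ((5:ℝ)/2))) ^ 2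
        = (1 / ((n:ℝ) * p * (1 - p))) ^ 2 *
          ((3 * π ^ 5) ^ 2 * (Real.sqrt (π * p * (1 - p))) ^ 2 /
            ((2 ^ 10) ^ 2 * (Real.sqrt (n:ℝ)) ^ 2)) *
          ((((n:ℝ) / ((n:ℝ) - 1)) ^ ((5:ℝ)/2)) ^ 2) := by
      ring
    rw [hsqrtps, hsqrtn, hX2] at e2
    have hsq : ((n:ℝ) * ((p * (1 - p)) ^ 2 / 8) * (3 / (4 * A ^ 2) * Real.sqrt (π / A))) ^ 2
        = ((1 / ((n:ℝ) * p * (1 - p))) *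
          (3 * π ^ 5 * Real.sqrt (π * p * (1 - p)) / (2 ^ 10 * Real.sqrt (n:ℝ)) *
            ((n:ℝ) / ((n:ℝ) - 1)) ^ ((5:ℝ)/2))) ^ 2 := by
      rw [e1, e2, hA_def, div_pow, div_pow, div_div_eq_mul_div, div_pow]
      field_simp
      ring
    calc (n:ℝ) * ((p * (1 - p)) ^ 2 / 8) * (3 / (4 * A ^ 2) * Real.sqrt (π / A))
        = Real.sqrt (((n:ℝ) * ((p * (1 - p)) ^ 2 / 8) * (3 / (4 * A ^ 2) * Real.sqrt (π / A))) ^ 2) :=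
          (Real.sqrt_sq hL0).symm
      _ = Real.sqrt (((1 / ((n:ℝ) * p * (1 - p))) *
          (3 * π ^ 5 * Real.sqrt (π * p * (1 - p)) / (2 ^ 10 * Real.sqrt (n:ℝ)) *
            ((n:ℝ) / ((n:ℝ) - 1)) ^ ((5:ℝ)/2))) ^ 2) := by rw [hsq]
      _ = _ := Real.sqrt_sq hR0
  -- gaussian tail comparison
  have hE1eq : Real.exp (-b2 * (π/2) ^ 2) = Real.exp (-π ^ 2 * ((n:ℝ) * p * (1 - p)) / 8) := by
    congr 1; rw [hb2_def]; ring
  have h2b : 2 * b2 = (n:ℝ) * p * (1 - p) := by rw [hb2_def]; ring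
  have hgtail : 2/π * ((Real.exp (-b2 * (π/2) ^ 2) - Real.exp (-b2 * π ^ 2)) / (2 * b2)) ≤
      (1 / ((n:ℝ) * p * (1 - p))) * (2 / π) * Real.exp (-π ^ 2 * ((n:ℝ) * p * (1 - p)) / 8) := by
    rw [hE1eq, h2b]
    have hE2 := Real.exp_pos (-b2 * π ^ 2)
    have hdd : (Real.exp (-π ^ 2 * ((n:ℝ) * p * (1 - p)) / 8) - Real.exp (-b2 * π ^ 2)) /
        ((n:ℝ) * p * (1 - p)) ≤ Real.exp (-π ^ 2 * ((n:ℝ) * p * (1 - p)) / 8) / ((n:ℝ) * p * (1 - p)) := by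
      exact (div_le_div_iff_of_pos_right hσ0).2 (by linarith)
    calc 2/π * ((Real.exp (-π ^ 2 * ((n:ℝ) * p * (1 - p)) / 8) - Real.exp (-b2 * π ^ 2)) /
          ((n:ℝ) * p * (1 - p)))
        ≤ 2/π * (Real.exp (-π ^ 2 * ((n:ℝ) * p * (1 - p)) / 8) / ((n:ℝ) * p * (1 - p))) := by
          apply mul_le_mul_of_nonneg_left hdd (by positivity)
      _ = (1 / ((n:ℝ) * p * (1 - p))) * (2 / π) * Real.exp (-π ^ 2 * ((n:ℝ) * p * (1 - p)) / 8) := by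
          ring
  -- final assembly
  rw [hsplit]
  have hπrn : π * r ^ n < π * Real.exp (-((n:ℝ) * p * (1 - p))) :=
    mul_lt_mul_of_pos_left hrlt hπ
  have hRHSeq : (1 / ((n:ℝ) * p * (1 - p))) *
        (((p ^ 2 + (1 - p) ^ 2) * (π ^ 4 / 96) * ((n:ℝ) / ((n:ℝ) - 1)) ^ 2 +
            (3 * π ^ 5 * Real.sqrt (π * p * (1 - p)) /
              (2 ^ 10 * Real.sqrt (n:ℝ))) * ((n:ℝ) / ((n:ℝ) - 1)) ^ ((5 : ℝ) / 2)) +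
          π * ((n:ℝ) * p * (1 - p)) * Real.exp (-((n:ℝ) * p * (1 - p))) +
          (4 / π) * Real.exp (-π ^ 2 * ((n:ℝ) * p * (1 - p)) / 8))
      = (1 / ((n:ℝ) * p * (1 - p))) *
          ((p ^ 2 + (1 - p) ^ 2) * (π ^ 4 / 96) * ((n:ℝ) / ((n:ℝ) - 1)) ^ 2)
        + (1 / ((n:ℝ) * p * (1 - p))) *
          (3 * π ^ 5 * Real.sqrt (π * p * (1 - p)) / (2 ^ 10 * Real.sqrt (n:ℝ)) *
            ((n:ℝ) / ((n:ℝ) - 1)) ^ ((5:ℝ)/2))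
        + π * Real.exp (-((n:ℝ) * p * (1 - p)))
        + 2 * ((1 / ((n:ℝ) * p * (1 - p))) * (2 / π) *
            Real.exp (-π ^ 2 * ((n:ℝ) * p * (1 - p)) / 8)) := by
    field_simp
    ring
  rw [hRHSeq]
  linarith [hIL, hIM, hIR, heq1, heq2, hgtail, hπrn]
end

section
/- The function A(p) = (1 − 2p)(1 + 2pq)/(√(pq)(1 − 2pq)²), where q = 1 − p, is strictly decreasing on the interval (0, 0.5). -/
/-- `A(p) = (1 − 2p)(1 + 2pq)/(√(pq)(1 − 2pq)²)` with `q = 1 − p`. -/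
noncomputable def A (p : ℝ) : ℝ :=
  (1 - 2 * p) * (1 + 2 * p * (1 - p)) /
    (Real.sqrt (p * (1 - p)) * (1 - 2 * p * (1 - p)) ^ 2)

noncomputable def hh (t : ℝ) : ℝ := (1 - 4*t) * (1 + 2*t)^2 / (t * (1 - 2*t)^4)

lemma hh_hasDerivAt (x : ℝ) (hx : x * (1 - 2*x)^4 ≠ 0) :
    HasDerivAt hh
      ((((-4) * (1 + 2*x)^2 + (1 - 4*x) * (2*(1+2*x)*2)) * (x * (1 - 2*x)^4)
          - (1 - 4*x) * (1 + 2*x)^2 * ((1-2*x)^4 + x * (4*(1-2*x)^3*(-2))))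
        / (x * (1 - 2*x)^4)^2) x := by
  have h1 : HasDerivAt (fun t : ℝ => 1 - 4*t) (-4) x := by
    simpa using (hasDerivAt_const x 1).fun_sub ((hasDerivAt_id x).const_mul 4)
  have h2 : HasDerivAt (fun t : ℝ => 1 + 2*t) 2 x := by
    simpa using (hasDerivAt_const x 1).fun_add ((hasDerivAt_id x).const_mul 2)
  have h3 : HasDerivAt (fun t : ℝ => (1 + 2*t)^2) (2*(1+2*x)*2) x := by
    simpa [mul_comm] using h2.fun_pow 2
  have hN : HasDerivAt (fun t : ℝ => (1 - 4*t)*(1 + 2*t)^2)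
      ((-4) * (1 + 2*x)^2 + (1 - 4*x) * (2*(1+2*x)*2)) x := h1.mul h3
  have h4 : HasDerivAt (fun t : ℝ => 1 - 2*t) (-2) x := by
    simpa using (hasDerivAt_const x 1).fun_sub ((hasDerivAt_id x).const_mul 2)
  have h5 : HasDerivAt (fun t : ℝ => (1 - 2*t)^4) (4*(1-2*x)^3*(-2)) x := by
    simpa [mul_comm] using h4.fun_pow 4
  have hD : HasDerivAt (fun t : ℝ => t * (1 - 2*t)^4)
      ((1-2*x)^4 + x * (4*(1-2*x)^3*(-2))) x := by
    simpa using (hasDerivAt_id x).fun_mul h5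
  exact hN.div hD hx

lemma hh_strictAntiOn : StrictAntiOn hh (Set.Ioo (0:ℝ) (1/4)) := by
  have key : ∀ x ∈ Set.Ioo (0:ℝ) (1/4), x * (1 - 2*x)^4 ≠ 0 := by
    intro x hx
    have h1 : 0 < x := hx.1
    have h2 : 0 < 1 - 2*x := by nlinarith [hx.2]
    positivity
  apply strictAntiOn_of_deriv_neg (convex_Ioo _ _)
  · apply ContinuousOn.div
    · fun_prop
    · fun_prop
    · exact key
  · intro x hx
    rw [interior_Ioo] at hx
    have hne := key x hx
    rw [(hh_hasDerivAt x hne).deriv]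
    apply div_neg_of_neg_of_pos
    · have h1 : 0 < x := hx.1
      have h2 : 0 < 1 - 2*x := by nlinarith [hx.2]
      have hG : 0 < 1 - 10*x + 12*x^2 + 104*x^3 + 64*x^4 := by
        nlinarith [sq_nonneg (1-4*x), sq_nonneg (1-5*x),
          mul_pos h1 (sub_pos.2 hx.2), mul_pos (mul_pos h1 h1) h1,
          sq_nonneg (1-6*x), sq_nonneg (x*(1-4*x))]
      have heq : (((-4) * (1 + 2*x)^2 + (1 - 4*x) * (2*(1+2*x)*2)) * (x * (1 - 2*x)^4)
          - (1 - 4*x) * (1 + 2*x)^2 * ((1-2*x)^4 + x * (4*(1-2*x)^3*(-2))))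
          = -((1-2*x)^3 * (1 - 10*x + 12*x^2 + 104*x^3 + 64*x^4)) := by ring
      rw [heq]
      have : 0 < (1-2*x)^3 * (1 - 10*x + 12*x^2 + 104*x^3 + 64*x^4) :=
        mul_pos (by positivity) hG
      linarith
    · have h1 : 0 < x := hx.1
      have h2 : 0 < 1 - 2*x := by nlinarith [hx.2]
      positivity

lemma A_facts (r : ℝ) (hr : r ∈ Set.Ioo (0:ℝ) 0.5) :
    0 < A r ∧ (A r)^2 = hh (r * (1 - r)) := by
  obtain ⟨hr0, hr5⟩ := hr
  have hr5' : r < 1/2 := by norm_num at hr5; linarith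
  have h2r : 0 < 1 - 2*r := by linarith
  have htr : 0 < r * (1 - r) := mul_pos hr0 (by linarith)
  have hsq : 0 < Real.sqrt (r * (1 - r)) := Real.sqrt_pos.2 htr
  have h2t : 0 < 1 - 2 * r * (1 - r) := by nlinarith
  constructor
  · apply div_pos
    · apply mul_pos h2r; nlinarith
    · apply mul_pos hsq; positivity
  · unfold A hh
    rw [div_pow]
    congr 1
    · ring
    · rw [mul_pow, Real.sq_sqrt htr.le]; ring

/-- The function `A(p)` is strictly decreasing on the interval `(0, 0.5)`. -/
theorem A_strictAntiOn : StrictAntiOn A (Set.Ioo (0 : ℝ) 0.5) := by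
  intro p hp q hq hpq
  obtain ⟨hAp, hAp2⟩ := A_facts p hp
  obtain ⟨hAq, hAq2⟩ := A_facts q hq
  have hp5 : p < 1/2 := by have := hp.2; norm_num at this; linarith
  have hq5 : q < 1/2 := by have := hq.2; norm_num at this; linarith
  have hp0 := hp.1
  have hq0 := hq.1
  have ht1 : p * (1 - p) ∈ Set.Ioo (0:ℝ) (1/4) := by
    constructor
    · exact mul_pos hp0 (by linarith)
    · nlinarith [sq_nonneg (1 - 2*p)]
  have ht2 : q * (1 - q) ∈ Set.Ioo (0:ℝ) (1/4) := by
    constructor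
    · exact mul_pos hq0 (by linarith)
    · nlinarith [sq_nonneg (1 - 2*q)]
  have hlt : p * (1 - p) < q * (1 - q) := by nlinarith
  have hhh : hh (q * (1 - q)) < hh (p * (1 - p)) := hh_strictAntiOn ht1 ht2 hlt
  have hsq : (A q)^2 < (A p)^2 := by rw [hAp2, hAq2]; exact hhh
  exact lt_of_pow_lt_pow_left₀ 2 hAp.le hsq
end

section
/- Let f₁ and f₂ be real functions differentiable on a finite open interval (a,b), and let g(x) = max{f₁(x), f₂(x)}. Then at every point x ∈ (a,b) both one-sided derivatives D⁺g(x) and D⁻g(x) exist, and each of them coincides with either f₁′(x) or f₂′(x). -/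
open Set Filter Topology

/-- If `f₁ x = f₂ x`, the right derivative of `max f₁ f₂` is `max d₁ d₂`. -/
lemma max_hasDerivWithinAt_Ici {f₁ f₂ : ℝ → ℝ} {d₁ d₂ x : ℝ}
    (hx : f₁ x = f₂ x) (h₁ : HasDerivAt f₁ d₁ x) (h₂ : HasDerivAt f₂ d₂ x) :
    HasDerivWithinAt (fun y => max (f₁ y) (f₂ y)) (max d₁ d₂) (Set.Ici x) x := by
  have t₁ := (hasDerivWithinAt_iff_tendsto_slope.1 (h₁.hasDerivWithinAt (s := Set.Ici x)))
  have t₂ := (hasDerivWithinAt_iff_tendsto_slope.1 (h₂.hasDerivWithinAt (s := Set.Ici x)))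
  rw [hasDerivWithinAt_iff_tendsto_slope] at *
  have hset : Set.Ici x \ {x} = Set.Ioi x := Set.Ici_sdiff_left
  rw [hset] at t₁ t₂ ⊢
  refine (t₁.max t₂).congr' ?_
  filter_upwards [self_mem_nhdsWithin] with y (hy : x < y)
  simp only [slope_def_field]
  rw [← hx, max_div_div_right (sub_nonneg.2 hy.le), max_sub_sub_right, max_self]

/-- If `f₁ x = f₂ x`, the left derivative of `max f₁ f₂` is `min d₁ d₂`. -/
lemma max_hasDerivWithinAt_Iic {f₁ f₂ : ℝ → ℝ} {d₁ d₂ x : ℝ}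
    (hx : f₁ x = f₂ x) (h₁ : HasDerivAt f₁ d₁ x) (h₂ : HasDerivAt f₂ d₂ x) :
    HasDerivWithinAt (fun y => max (f₁ y) (f₂ y)) (min d₁ d₂) (Set.Iic x) x := by
  have t₁ := (hasDerivWithinAt_iff_tendsto_slope.1 (h₁.hasDerivWithinAt (s := Set.Iic x)))
  have t₂ := (hasDerivWithinAt_iff_tendsto_slope.1 (h₂.hasDerivWithinAt (s := Set.Iic x)))
  rw [hasDerivWithinAt_iff_tendsto_slope] at *
  have hset : Set.Iic x \ {x} = Set.Iio x := Set.Iic_diff_right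
  rw [hset] at t₁ t₂ ⊢
  refine (t₁.min t₂).congr' ?_
  filter_upwards [self_mem_nhdsWithin] with y (hy : y < x)
  simp only [slope_def_field]
  rw [← hx, min_div_div_right_of_nonpos (sub_nonpos.2 hy.le), max_sub_sub_right, max_self]

/-- If `f₁ x ≠ f₂ x`, then `max f₁ f₂` agrees with one of them near `x`. -/
lemma max_hasDerivAt_of_lt {f₁ f₂ : ℝ → ℝ} {d₁ d₂ x : ℝ}
    (hx : f₂ x < f₁ x) (h₁ : HasDerivAt f₁ d₁ x) (h₂ : HasDerivAt f₂ d₂ x) :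
    HasDerivAt (fun y => max (f₁ y) (f₂ y)) d₁ x := by
  have hc : ContinuousAt (fun y => f₁ y - f₂ y) x :=
    (h₁.continuousAt.sub h₂.continuousAt)
  have hpos : ∀ᶠ y in 𝓝 x, f₂ y < f₁ y := by
    have := continuousAt_const.eventually_lt hc (show (0:ℝ) < f₁ x - f₂ x from sub_pos.2 hx)
    filter_upwards [this] with y hy
    exact sub_pos.1 hy
  refine h₁.congr_of_eventuallyEq ?_
  filter_upwards [hpos] with y hy
  exact max_eq_left hy.le

/-- Let `f₁, f₂` be differentiable on a finite interval `(a,b)` and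
`g(x) = max{f₁(x), f₂(x)}`. Then at every `x ∈ (a,b)` both one-sided
derivatives `D⁺g(x)` and `D⁻g(x)` exist, and each of them coincides with
either `f₁′(x)` or `f₂′(x)`. -/
theorem oneSided_deriv_of_max (a b : ℝ) (hab : a < b)
    (f₁ f₂ f₁' f₂' : ℝ → ℝ)
    (h₁ : ∀ x ∈ Set.Ioo a b, HasDerivAt f₁ (f₁' x) x)
    (h₂ : ∀ x ∈ Set.Ioo a b, HasDerivAt f₂ (f₂' x) x)
    (g : ℝ → ℝ) (hg : ∀ x, g x = max (f₁ x) (f₂ x)) :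
    ∀ x ∈ Set.Ioo a b,
      (∃ d : ℝ, HasDerivWithinAt g d (Set.Ici x) x ∧ (d = f₁' x ∨ d = f₂' x)) ∧
      (∃ d : ℝ, HasDerivWithinAt g d (Set.Iic x) x ∧ (d = f₁' x ∨ d = f₂' x)) := by
  intro x hx
  have hgeq : g = fun y => max (f₁ y) (f₂ y) := funext hg
  have H₁ := h₁ x hx
  have H₂ := h₂ x hx
  rcases lt_trichotomy (f₁ x) (f₂ x) with h | h | h
  · have hmax : HasDerivAt (fun y => max (f₂ y) (f₁ y)) (f₂' x) x :=
      max_hasDerivAt_of_lt h H₂ H₁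
    have hmax' : HasDerivAt g (f₂' x) x := by
      rw [hgeq]
      refine hmax.congr_of_eventuallyEq (Eventually.of_forall fun y => max_comm _ _)
    exact ⟨⟨f₂' x, hmax'.hasDerivWithinAt, Or.inr rfl⟩,
           ⟨f₂' x, hmax'.hasDerivWithinAt, Or.inr rfl⟩⟩
  · constructor
    · refine ⟨max (f₁' x) (f₂' x), hgeq ▸ max_hasDerivWithinAt_Ici h H₁ H₂, ?_⟩
      rcases le_total (f₁' x) (f₂' x) with hle | hle
      · exact Or.inr (max_eq_right hle)
      · exact Or.inl (max_eq_left hle)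
    · refine ⟨min (f₁' x) (f₂' x), hgeq ▸ max_hasDerivWithinAt_Iic h H₁ H₂, ?_⟩
      rcases le_total (f₁' x) (f₂' x) with hle | hle
      · exact Or.inl (min_eq_left hle)
      · exact Or.inr (min_eq_right hle)
  · have hmax' : HasDerivAt g (f₁' x) x := hgeq ▸ max_hasDerivAt_of_lt h H₁ H₂
    exact ⟨⟨f₁' x, hmax'.hasDerivWithinAt, Or.inl rfl⟩,
           ⟨f₁' x, hmax'.hasDerivWithinAt, Or.inl rfl⟩⟩
end

section
/- Let 0 < p < 1, q = 1 − p, f(t) = q e^{−itp} + p e^{itq}, and β₃(p) = E|X − p|³ = pq(p² + q²) the third absolute central moment of the Bernoulli(p) variable X. Then for all real t, |f(t) − e^{−pqt²/2}| ≤ (|t|³/6)·β₃(p) + (t⁴/8)·(pq)². -/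
open Complex Real Set

lemma myHasDerivAt_expI (y : ℝ) :
    HasDerivAt (fun s : ℝ => Complex.exp (Complex.I * s)) (Complex.I * Complex.exp (Complex.I * y)) y := by
  have h0 : HasDerivAt (fun s : ℝ => ((s : ℂ))) 1 y := Complex.ofRealCLM.hasDerivAt
  have h1 : HasDerivAt (fun s : ℝ => Complex.I * (s : ℂ)) Complex.I y := by
    simpa using h0.const_mul Complex.I
  simpa [mul_comm] using h1.cexp

lemma base_bound (s : ℝ) (hs : 0 ≤ s) : ‖Complex.exp (Complex.I * s) - 1‖ ≤ s := by
  have hcos : 1 - s ^ 2 / 2 ≤ Real.cos s := Real.one_sub_sq_div_two_le_cos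
  have h : Complex.exp (Complex.I * s) - 1 =
      Complex.ofReal (Real.cos s - 1) + Complex.ofReal (Real.sin s) * Complex.I := by
    rw [mul_comm, Complex.exp_mul_I]; push_cast; ring
  rw [h, Complex.norm_def]
  have hns : Complex.normSq ((Real.cos s - 1 : ℝ) + (Real.sin s : ℝ) * Complex.I) =
      (Real.cos s - 1) ^ 2 + Real.sin s ^ 2 := by
    rw [Complex.normSq_apply]; simp [Complex.cos_ofReal_re, Complex.sin_ofReal_re]; ring
  rw [hns]
  have hle : (Real.cos s - 1) ^ 2 + Real.sin s ^ 2 ≤ s ^ 2 := by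
    have := Real.sin_sq_add_cos_sq s
    nlinarith [Real.cos_le_one s]
  calc Real.sqrt ((Real.cos s - 1) ^ 2 + Real.sin s ^ 2) ≤ Real.sqrt (s ^ 2) :=
        Real.sqrt_le_sqrt hle
    _ = s := by rw [Real.sqrt_sq hs]

lemma bound1 (y : ℝ) (hy : 0 ≤ y) :
    ‖Complex.exp (Complex.I * y) - 1 - Complex.I * y‖ ≤ y ^ 2 / 2 := by
  have key := image_norm_le_of_norm_deriv_right_le_deriv_boundary
    (f := fun s : ℝ => Complex.exp (Complex.I * s) - 1 - Complex.I * s)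
    (f' := fun s : ℝ => Complex.I * (Complex.exp (Complex.I * s) - 1))
    (a := 0) (b := y) (B := fun s => s ^ 2 / 2) (B' := fun s => s)
    (by fun_prop)
    (fun x hx => by
      have h0 : HasDerivAt (fun s : ℝ => Complex.I * (s : ℂ)) Complex.I x := by
        simpa using (Complex.ofRealCLM.hasDerivAt (x := x)).const_mul Complex.I
      have := ((myHasDerivAt_expI x).sub_const 1).sub h0
      have h2 : Complex.I * Complex.exp (Complex.I * x) - Complex.I =
          Complex.I * (Complex.exp (Complex.I * x) - 1) := by ring
      rw [h2] at this
      exact this.hasDerivWithinAt)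
    (by simp)
    (fun x => by simpa using (hasDerivAt_pow 2 x).div_const 2)
    (fun x hx => by
      rw [norm_mul]
      simpa using base_bound x hx.1)
  simpa using key (right_mem_Icc.2 hy)

lemma bound2 (y : ℝ) (hy : 0 ≤ y) :
    ‖Complex.exp (Complex.I * y) - 1 - Complex.I * y + (y : ℂ) ^ 2 / 2‖ ≤ y ^ 3 / 6 := by
  have key := image_norm_le_of_norm_deriv_right_le_deriv_boundary
    (f := fun s : ℝ => Complex.exp (Complex.I * s) - 1 - Complex.I * s + (s : ℂ) ^ 2 / 2)
    (f' := fun s : ℝ => Complex.I * (Complex.exp (Complex.I * s) - 1 - Complex.I * s))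
    (a := 0) (b := y) (B := fun s => s ^ 3 / 6) (B' := fun s => s ^ 2 / 2)
    (by fun_prop)
    (fun x hx => by
      have h0 : HasDerivAt (fun s : ℝ => Complex.I * (s : ℂ)) Complex.I x := by
        simpa using (Complex.ofRealCLM.hasDerivAt (x := x)).const_mul Complex.I
      have hsq : HasDerivAt (fun s : ℝ => ((s : ℂ) ^ 2 / 2)) (x : ℂ) x := by
        have h1 : HasDerivAt (fun s : ℝ => ((s : ℂ))) 1 x := Complex.ofRealCLM.hasDerivAt
        simpa [sq] using (h1.mul h1).div_const 2
      have := (((myHasDerivAt_expI x).sub_const 1).sub h0).add hsq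
      have h2 : Complex.I * Complex.exp (Complex.I * x) - Complex.I + (x : ℂ) =
          Complex.I * (Complex.exp (Complex.I * x) - 1 - Complex.I * x) := by
        have : Complex.I * Complex.I = -1 := Complex.I_mul_I
        ring_nf
        rw [Complex.I_sq]
        ring
      rw [h2] at this
      exact this.hasDerivWithinAt)
    (by simp)
    (fun x => by have := (hasDerivAt_pow 3 x).div_const 6; norm_num at this; exact this.congr_deriv (by ring))
    (fun x hx => by
      rw [norm_mul]
      simpa using bound1 x hx.1)
  simpa using key (right_mem_Icc.2 hy)

lemma taylor3 (y : ℝ) :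
    ‖Complex.exp (Complex.I * y) - 1 - Complex.I * y + (y : ℂ) ^ 2 / 2‖ ≤ |y| ^ 3 / 6 := by
  rcases le_or_gt 0 y with hy | hy
  · rw [_root_.abs_of_nonneg hy]; exact bound2 y hy
  · have hy' : 0 ≤ -y := by linarith
    have h := bound2 (-y) hy'
    have hconj : Complex.exp (Complex.I * y) - 1 - Complex.I * y + (y : ℂ) ^ 2 / 2 =
        (starRingEnd ℂ) (Complex.exp (Complex.I * (-y : ℝ)) - 1 - Complex.I * (-y : ℝ) + ((-y : ℝ) : ℂ) ^ 2 / 2) := by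
      simp only [map_add, map_sub, map_mul, map_div₀, map_pow, map_one, ← Complex.exp_conj]
      simp [Complex.conj_I, Complex.conj_ofReal, Complex.conj_ofNat]
    rw [hconj, RCLike.norm_conj, _root_.abs_of_neg hy]
    simpa using h

lemma exp_neg_quad_bound (x : ℝ) (hx : 0 ≤ x) : |Real.exp (-x) - (1 - x)| ≤ x ^ 2 / 2 := by
  have h1 : 1 - x ≤ Real.exp (-x) := by
    have := Real.add_one_le_exp (-x); linarith
  have hs : 1 + x + x ^ 2 / 2 ≤ Real.exp x := by
    have := Real.sum_le_exp_of_nonneg hx 3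
    simp [Finset.sum_range_succ] at this
    nlinarith [this]
  have h2 : Real.exp (-x) ≤ 1 - x + x ^ 2 / 2 := by
    rw [Real.exp_neg]
    rw [inv_le_iff_one_le_mul₀ (Real.exp_pos x)]
    nlinarith [Real.exp_pos x, sq_nonneg x, sq_nonneg (x ^ 2)]
  rw [abs_le]; constructor <;> linarith




/-- For `0 < p < 1`, `q = 1 − p`, `f(t) = q e^{−itp} + p e^{itq}` and
`β₃(p) = E|X − p|³ = pq(p² + q²)`, we have for all real `t`:
`|f(t) − e^{−pqt²/2}| ≤ (|t|³/6) β₃(p) + (t⁴/8) (pq)²`. -/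
theorem charfun_minus_gaussian_bound (p : ℝ) (hp : p ∈ Set.Ioo (0 : ℝ) 1)
    (f : ℝ → ℂ)
    (hf : ∀ t : ℝ, f t =
      (1 - p : ℂ) * Complex.exp (-Complex.I * t * p) +
        (p : ℂ) * Complex.exp (Complex.I * t * (1 - p)))
    (t : ℝ) :
    ‖f t - (Real.exp (-(p * (1 - p) * t ^ 2) / 2) : ℂ)‖ ≤
      (|t| ^ 3 / 6) * (p * (1 - p) * (p ^ 2 + (1 - p) ^ 2)) +
        (t ^ 4 / 8) * (p * (1 - p)) ^ 2 := by
  obtain ⟨hp0, hp1⟩ := hp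
  have hq0 : (0:ℝ) < 1 - p := by linarith
  set q : ℝ := 1 - p with hq
  set M : ℂ := ((1 - p * q * t ^ 2 / 2 : ℝ) : ℂ) with hM
  set R : ℝ → ℂ := fun y => Complex.exp (Complex.I * y) - 1 - Complex.I * y + (y : ℂ) ^ 2 / 2
    with hR
  have hdecomp : f t - M = (q : ℂ) * R (-(t * p)) + (p : ℂ) * R (t * q) := by
    rw [hf t, hM, hR]
    have e1 : -Complex.I * t * p = Complex.I * ((-(t * p) : ℝ) : ℂ) := by push_cast; ring
    have e2 : Complex.I * t * ((1:ℂ) - p) = Complex.I * ((t * q : ℝ) : ℂ) := by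
      rw [hq]; push_cast; ring
    rw [e1, e2]
    simp only [hq]
    push_cast
    ring
  have habs1 : ‖f t - M‖ ≤ (|t| ^ 3 / 6) * (p * q * (p ^ 2 + q ^ 2)) := by
    rw [hdecomp]
    calc ‖(q : ℂ) * R (-(t * p)) + (p : ℂ) * R (t * q)‖
        ≤ ‖(q : ℂ) * R (-(t * p))‖ + ‖(p : ℂ) * R (t * q)‖ :=
          norm_add_le _ _
      _ = q * ‖R (-(t * p))‖ + p * ‖R (t * q)‖ := by
          rw [norm_mul, norm_mul, Complex.norm_real, Complex.norm_real, Real.norm_eq_abs, Real.norm_eq_abs,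
            _root_.abs_of_pos hq0, _root_.abs_of_pos hp0]
      _ ≤ q * (|(-(t * p))| ^ 3 / 6) + p * (|t * q| ^ 3 / 6) := by
          gcongr
          · exact taylor3 _
          · exact taylor3 _
      _ = (|t| ^ 3 / 6) * (p * q * (p ^ 2 + q ^ 2)) := by
          rw [abs_neg, abs_mul, abs_mul, _root_.abs_of_pos hp0, _root_.abs_of_pos hq0]
          ring
  have habs2 : ‖M - (Real.exp (-(p * q * t ^ 2) / 2) : ℂ)‖ ≤
      (t ^ 4 / 8) * (p * q) ^ 2 := by
    have hx : (0:ℝ) ≤ p * q * t ^ 2 / 2 := by positivity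
    have := exp_neg_quad_bound (p * q * t ^ 2 / 2) hx
    rw [hM]
    rw [show ((1 - p * q * t ^ 2 / 2 : ℝ) : ℂ) - (Real.exp (-(p * q * t ^ 2) / 2) : ℂ) =
      (((1 - p * q * t ^ 2 / 2) - Real.exp (-(p * q * t ^ 2) / 2) : ℝ) : ℂ) by push_cast; ring]
    rw [Complex.norm_real, Real.norm_eq_abs]
    have he : -(p * q * t ^ 2) / 2 = -(p * q * t ^ 2 / 2) := by ring
    rw [he]
    rw [abs_sub_comm]
    calc |Real.exp (-(p * q * t ^ 2 / 2)) - (1 - p * q * t ^ 2 / 2)| ≤ (p * q * t ^ 2 / 2) ^ 2 / 2 := this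
      _ = (t ^ 4 / 8) * (p * q) ^ 2 := by ring
  calc ‖f t - (Real.exp (-(p * q * t ^ 2) / 2) : ℂ)‖
      ≤ ‖f t - M‖ + ‖M - (Real.exp (-(p * q * t ^ 2) / 2) : ℂ)‖ := by
        simpa using norm_sub_le_norm_sub_add_norm_sub (f t) M _
    _ ≤ (|t| ^ 3 / 6) * (p * q * (p ^ 2 + q ^ 2)) + (t ^ 4 / 8) * (p * q) ^ 2 := by
        exact add_le_add habs1 habs2
end

section
/- Let 0 < p < 1, q = 1 − p, and f(t) = q e^{−itp} + p e^{itq}. Then for all real t with |t| ≤ π/2, |f(t)| ≤ exp(−4t²pq/π²). -/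
/-- Sharp linear lower bound for `sin` on `[0, π/4]`. -/
lemma sin_lb_aux {x : ℝ} (hx0 : 0 ≤ x) (hx : x ≤ Real.pi / 4) :
    2 * Real.sqrt 2 / Real.pi * x ≤ Real.sin x := by
  have hpi : (0:ℝ) < Real.pi := Real.pi_pos
  have h4 : (0:ℝ) < Real.pi / 4 := by positivity
  set b : ℝ := x / (Real.pi / 4) with hb
  have hb0 : 0 ≤ b := by positivity
  have hb1 : b ≤ 1 := by rw [hb, div_le_one h4]; exact hx
  have key : (1 - b) • Real.sin 0 + b • Real.sin (Real.pi / 4)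
      ≤ Real.sin ((1 - b) • (0:ℝ) + b • (Real.pi / 4)) :=
    strictConcaveOn_sin_Icc.concaveOn.2 ⟨le_rfl, hpi.le⟩
      ⟨h4.le, by linarith⟩ (by linarith) hb0 (by ring)
  have hxb : (1 - b) • (0:ℝ) + b • (Real.pi / 4) = x := by
    simp only [smul_eq_mul, hb]; field_simp; ring
  rw [hxb, Real.sin_zero, Real.sin_pi_div_four] at key
  have : (1 - b) • (0:ℝ) + b • (Real.sqrt 2 / 2) = 2 * Real.sqrt 2 / Real.pi * x := by
    simp only [smul_eq_mul, hb]; field_simp; ring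
  linarith [this ▸ key]

/-- For `0 < p < 1`, `q = 1 − p`, `f(t) = q e^{−itp} + p e^{itq}`, and all real
`t` with `|t| ≤ π/2`, we have `|f(t)| ≤ exp(−4t²pq/π²)`. -/
theorem charfun_gaussian_type_bound (p : ℝ) (hp : p ∈ Set.Ioo (0 : ℝ) 1)
    (f : ℝ → ℂ)
    (hf : ∀ t : ℝ, f t =
      (1 - p : ℂ) * Complex.exp (-Complex.I * t * p) +
        (p : ℂ) * Complex.exp (Complex.I * t * (1 - p)))
    (t : ℝ) (ht : |t| ≤ Real.pi / 2) :
    ‖f t‖ ≤ Real.exp (-4 * t ^ 2 * p * (1 - p) / Real.pi ^ 2) := by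
  obtain ⟨hp0, hp1⟩ := hp
  have hpi : (0:ℝ) < Real.pi := Real.pi_pos
  set q : ℝ := 1 - p with hq
  have hq0 : 0 < q := by rw [hq]; linarith
  clear_value q
  have e1 : -Complex.I * (t:ℂ) * (p:ℂ) = ((-(t*p) : ℝ) : ℂ) * Complex.I := by
    push_cast; ring
  have e2 : Complex.I * (t:ℂ) * (1 - (p:ℂ)) = ((t*q : ℝ) : ℂ) * Complex.I := by
    rw [hq]; push_cast; ring
  have hft : f t = (q:ℂ) * Complex.exp (((-(t*p)) : ℝ) * Complex.I)
      + (p:ℂ) * Complex.exp (((t*q) : ℝ) * Complex.I) := by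
    rw [hf t, e1, e2, hq]; push_cast; ring
  have hre : f t = Complex.ofReal (q * Real.cos (t*p) + p * Real.cos (t*q))
      + Complex.ofReal (-(q * Real.sin (t*p)) + p * Real.sin (t*q)) * Complex.I := by
    rw [hft, Complex.exp_mul_I, Complex.exp_mul_I]
    push_cast [Real.cos_neg, Real.sin_neg, Complex.cos_neg, Complex.sin_neg]
    ring
  have habs2 : ‖f t‖ ^ 2 = q^2 + p^2 + 2*p*q*Real.cos t := by
    rw [Complex.sq_norm, hre, Complex.normSq_add_mul_I]
    have hc : Real.cos t = Real.cos (t*p) * Real.cos (t*q) - Real.sin (t*p) * Real.sin (t*q) := by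
      rw [← Real.cos_add, hq]; ring_nf
    linear_combination q^2 * Real.sin_sq_add_cos_sq (t*p) + p^2 * Real.sin_sq_add_cos_sq (t*q)
      - 2*p*q*hc
  have hcos : Real.cos t = 1 - 2 * Real.sin (t/2)^2 := by
    have h2 := Real.cos_two_mul (t/2)
    have h3 := Real.sin_sq_add_cos_sq (t/2)
    rw [show (2:ℝ)*(t/2) = t by ring] at h2
    linarith
  have hsin : 2 * t^2 / Real.pi^2 ≤ Real.sin (t/2)^2 := by
    have h1 : Real.sin (t/2)^2 = Real.sin (|t|/2)^2 := by
      rcases abs_cases t with ⟨h, _⟩ | ⟨h, _⟩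
      · rw [h]
      · rw [h, show -t/2 = -(t/2) by ring, Real.sin_neg]; ring
    have h2 : 2 * Real.sqrt 2 / Real.pi * (|t|/2) ≤ Real.sin (|t|/2) := by
      apply sin_lb_aux (by positivity); linarith
    have h3 : (0:ℝ) ≤ 2 * Real.sqrt 2 / Real.pi * (|t|/2) := by positivity
    have hsq : (2 * Real.sqrt 2 / Real.pi * (|t|/2))^2 ≤ Real.sin (|t|/2)^2 :=
      pow_le_pow_left₀ h3 h2 2
    have hs2 : Real.sqrt 2 ^ 2 = 2 := Real.sq_sqrt (by norm_num)
    have habs : |t|^2 = t^2 := sq_abs t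
    have key : (2 * Real.sqrt 2 / Real.pi * (|t|/2))^2 = 2 * t^2 / Real.pi^2 := by
      linear_combination (|t|^2/Real.pi^2) * hs2 + (2/Real.pi^2) * habs
    rw [h1, ← key]; exact hsq
  have hpq : 0 < p * q := mul_pos hp0 hq0
  have hqpq : q^2 + p^2 + 2*p*q = 1 := by rw [hq]; ring
  have hmul : 4 * p * q * (2 * t^2 / Real.pi^2) ≤ 4 * p * q * Real.sin (t/2)^2 :=
    mul_le_mul_of_nonneg_left hsin (by positivity)
  have hstep : ‖f t‖ ^ 2 ≤ 1 - 8 * p * q * t^2 / Real.pi^2 := by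
    rw [habs2, hcos,
      show 8 * p * q * t ^ 2 / Real.pi ^ 2 = 4 * p * q * (2 * t ^ 2 / Real.pi ^ 2) by ring]
    nlinarith [hmul, hqpq]
  have hexp : 1 - 8 * p * q * t^2 / Real.pi^2 ≤ Real.exp (-(8 * p * q * t^2 / Real.pi^2)) := by
    have := Real.add_one_le_exp (-(8 * p * q * t^2 / Real.pi^2))
    linarith
  have hfinal : ‖f t‖ ^ 2 ≤ Real.exp (-4 * t ^ 2 * p * q / Real.pi ^ 2) ^ 2 := by
    rw [← Real.exp_nat_mul]
    calc ‖f t‖ ^ 2 ≤ Real.exp (-(8 * p * q * t^2 / Real.pi^2)) :=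
          le_trans hstep hexp
      _ = Real.exp ((2:ℕ) * (-4 * t ^ 2 * p * q / Real.pi ^ 2)) := by
          congr 1; rw [hq]; push_cast; ring
  have := Real.sqrt_le_sqrt hfinal
  rwa [Real.sqrt_sq (norm_nonneg _), Real.sqrt_sq (Real.exp_nonneg _)] at this
end
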